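/- Fix an integer n ≥ 1. For every p ≥ 0 one has Φ_{p;0} = L^p·Φ₀ and Φ_{p;1} = L^p·Φ₁ − ((n−p)·p/(2n))·L^{p−1}·(1 − L^{−n})·Φ₀ in ℚ[[q]]. -/

import Mathlib

/-- The operator `D = q·d/dq` on `ℚ[[q]]`. -/
noncomputable def Dq (f : PowerSeries ℚ) : PowerSeries ℚ :=
  PowerSeries.mk fun d => (d : ℚ) * PowerSeries.coeff d f

lemma Dq_mul (f g : PowerSeries ℚ) : Dq (f * g) = Dq f * g + f * Dq g := by
  ext d
  simp only [Dq, PowerSeries.coeff_mk, map_add, PowerSeries.coeff_mul, Finset.mul_sum]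
  rw [← Finset.sum_add_distrib]
  refine Finset.sum_congr rfl fun x hx => ?_
  rw [Finset.HasAntidiagonal.mem_antidiagonal] at hx
  rw [← hx]
  push_cast
  ring

lemma Dq_one : Dq (1 : PowerSeries ℚ) = 0 := by
  ext d
  simp only [Dq, PowerSeries.coeff_mk, PowerSeries.coeff_one, map_zero]
  rcases d with _ | d <;> simp

lemma Dq_one_add_X : Dq (1 + PowerSeries.X) = (PowerSeries.X : PowerSeries ℚ) := by
  ext d
  simp only [Dq, PowerSeries.coeff_mk, map_add, PowerSeries.coeff_one, PowerSeries.coeff_X]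
  rcases d with _ | d
  · simp
  · rcases d with _ | d <;> simp

/-- For every `p ≥ 0`: `Φ_{p;0} = L^p·Φ₀` and
`Φ_{p;1} = L^p·Φ₁ − ((n−p)·p/(2n))·L^{p−1}·(1 − L^{−n})·Φ₀` in `ℚ[[q]]`.
Here `L` is the unique power series with constant term `1` and `Lⁿ = 1+q`,
`Φ₀` is the unique power series with constant term `1` and `Φ₀²·L^{n−1} = 1`,
`Φ₁ = ((n−1)/(24n))·(n + (n+1)·L⁻¹ − (2n+1)·L^{−(n+1)})·Φ₀`, and
`P0 p = Φ_{p;0}`, `P1 p = Φ_{p;1}` are defined by the recursions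
`Φ_{0;0} = Φ₀`, `Φ_{0;1} = Φ₁`, `Φ_{p;0} = L·Φ_{p−1;0}`,
`Φ_{p;1} = L·Φ_{p−1;1} + D·Φ_{p−1;0}`. -/
theorem stmt_2 (n : ℕ) (hn : 1 ≤ n) (L Φ₀ Φ₁ : PowerSeries ℚ)
    (hL0 : PowerSeries.constantCoeff L = 1) (hLn : L ^ n = 1 + PowerSeries.X)
    (hΦ₀0 : PowerSeries.constantCoeff Φ₀ = 1) (hΦ₀ : Φ₀ ^ 2 * L ^ (n - 1) = 1)
    (hΦ₁ : Φ₁ = PowerSeries.C (((n : ℚ) - 1) / (24 * (n : ℚ))) *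
      (PowerSeries.C (n : ℚ) + PowerSeries.C ((n : ℚ) + 1) * L⁻¹ -
        PowerSeries.C (2 * (n : ℚ) + 1) * (L ^ (n + 1))⁻¹) * Φ₀)
    (P0 P1 : ℕ → PowerSeries ℚ)
    (hP00 : P0 0 = Φ₀) (hP10 : P1 0 = Φ₁)
    (hP0 : ∀ p : ℕ, P0 (p + 1) = L * P0 p)
    (hP1 : ∀ p : ℕ, P1 (p + 1) = L * P1 p + Dq (P0 p)) :
    ∀ p : ℕ,
      P0 p = L ^ p * Φ₀ ∧
      P1 p = L ^ p * Φ₁ -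
        PowerSeries.C (((n : ℚ) - (p : ℚ)) * (p : ℚ) / (2 * (n : ℚ))) *
          L ^ (p - 1) * (1 - (L ^ n)⁻¹) * Φ₀ := by
  have hQ : (n : ℚ) ≠ 0 := Nat.cast_ne_zero.mpr (by omega)
  have hLne : L ≠ 0 := fun h => by simp [h] at hL0
  have hΦne : Φ₀ ≠ 0 := fun h => by simp [h] at hΦ₀0
  have hCn : (PowerSeries.C (n : ℚ)) ≠ 0 := fun h => hQ (by
    simpa using congrArg (PowerSeries.constantCoeff) h)
  have h2ne : (2 : PowerSeries ℚ) ≠ 0 := fun h => by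
    have := congrArg (PowerSeries.constantCoeff) h
    rw [map_ofNat, map_zero] at this
    norm_num at this
  have h2Cn : (2 * PowerSeries.C (n : ℚ) : PowerSeries ℚ) ≠ 0 :=
    mul_ne_zero h2ne hCn
  set E : PowerSeries ℚ := 1 - (L ^ n)⁻¹ with hEdef
  have hinv : L ^ n * (L ^ n)⁻¹ = 1 := by
    apply PowerSeries.mul_inv_cancel
    rw [map_pow, hL0, one_pow]
    exact one_ne_zero
  have hXE : L ^ n * E = PowerSeries.X := by
    rw [hEdef, mul_sub, mul_one, hinv, hLn]; ring
  have hDLn : Dq (L ^ n) = PowerSeries.X := by rw [hLn, Dq_one_add_X]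
  have hpow : ∀ k : ℕ, Dq (L ^ (k + 1)) = PowerSeries.C ((k : ℚ) + 1) * L ^ k * Dq L := by
    intro k
    induction k with
    | zero => norm_num
    | succ k ih =>
      rw [pow_succ, Dq_mul, ih]
      push_cast
      have : (PowerSeries.C) ((k : ℚ) + 1 + 1) = (PowerSeries.C) ((k : ℚ) + 1) + 1 := by
        rw [map_add, map_one]
      rw [this, pow_succ]
      ring
  have hDL : PowerSeries.C (n : ℚ) * Dq L = L * E := by
    obtain ⟨m, rfl⟩ : ∃ m, n = m + 1 := ⟨n - 1, by omega⟩
    have h1 := hpow m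
    rw [hDLn] at h1
    apply mul_right_cancel₀ (pow_ne_zero (m + 1) hLne)
    push_cast
    calc PowerSeries.C ((m : ℚ) + 1) * Dq L * L ^ (m + 1)
        = (PowerSeries.C ((m : ℚ) + 1) * L ^ m * Dq L) * L := by ring
      _ = PowerSeries.X * L := by rw [← h1]
      _ = (L ^ (m + 1) * E) * L := by rw [hXE]
      _ = L * E * L ^ (m + 1) := by ring
  have hDLp : ∀ p : ℕ, PowerSeries.C (n : ℚ) * Dq (L ^ p) =
      PowerSeries.C (p : ℚ) * L ^ p * E := by
    intro p
    rcases p with _ | k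
    · simp [Dq_one]
    · rw [hpow k]
      push_cast
      calc PowerSeries.C (n : ℚ) * (PowerSeries.C ((k : ℚ) + 1) * L ^ k * Dq L)
          = PowerSeries.C ((k : ℚ) + 1) * L ^ k * (PowerSeries.C (n : ℚ) * Dq L) := by ring
        _ = PowerSeries.C ((k : ℚ) + 1) * L ^ k * (L * E) := by rw [hDL]
        _ = PowerSeries.C ((k : ℚ) + 1) * L ^ (k + 1) * E := by rw [pow_succ]; ring
  have hΦ₀L : Φ₀ * Φ₀ * L ^ n = L := by
    obtain ⟨m, rfl⟩ : ∃ m, n = m + 1 := ⟨n - 1, by omega⟩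
    simp only [Nat.add_sub_cancel] at hΦ₀
    calc Φ₀ * Φ₀ * L ^ (m + 1) = Φ₀ ^ 2 * L ^ m * L := by ring
      _ = 1 * L := by rw [hΦ₀]
      _ = L := one_mul L
  have hD2 : (Dq Φ₀ * Φ₀ + Φ₀ * Dq Φ₀) * L ^ n + Φ₀ * Φ₀ * PowerSeries.X = Dq L := by
    rw [← hDLn, ← Dq_mul, ← Dq_mul, hΦ₀L]
  have hDΦ₀ : 2 * PowerSeries.C (n : ℚ) * Dq Φ₀ =
      (1 - PowerSeries.C (n : ℚ)) * E * Φ₀ := by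
    apply mul_right_cancel₀ (mul_ne_zero (pow_ne_zero n hLne) hΦne)
    linear_combination (PowerSeries.C (n : ℚ)) * hD2 + hDL +
      (PowerSeries.C (n : ℚ) * Φ₀ * Φ₀) * hXE + (-E) * hΦ₀L
  have hDP : ∀ p : ℕ, 2 * PowerSeries.C (n : ℚ) * Dq (L ^ p * Φ₀) =
      (2 * PowerSeries.C (p : ℚ) + 1 - PowerSeries.C (n : ℚ)) * L ^ p * E * Φ₀ := by
    intro p
    linear_combination (2 * PowerSeries.C (n : ℚ)) * Dq_mul (L ^ p) Φ₀ +
      (2 * Φ₀) * hDLp p + (L ^ p) * hDΦ₀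
  intro p
  induction p with
  | zero =>
    refine ⟨by simpa using hP00, ?_⟩
    rw [hP10]
    simp
  | succ p ih =>
    obtain ⟨ih0, ih1⟩ := ih
    have hc1 : 2 * PowerSeries.C (n : ℚ) *
        PowerSeries.C (((n : ℚ) - (p : ℚ)) * (p : ℚ) / (2 * (n : ℚ))) =
        PowerSeries.C (((n : ℚ) - (p : ℚ)) * (p : ℚ)) := by
      rw [show (2 : PowerSeries ℚ) = PowerSeries.C 2 from (map_ofNat _ 2).symm,
        ← map_mul, ← map_mul]
      congr 1
      field_simp
      try ring
    have hc2 : 2 * PowerSeries.C (n : ℚ) *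
        PowerSeries.C (((n : ℚ) - ((p : ℚ) + 1)) * ((p : ℚ) + 1) / (2 * (n : ℚ))) =
        PowerSeries.C (((n : ℚ) - (p : ℚ)) * (p : ℚ)) - 2 * PowerSeries.C (p : ℚ)
          - 1 + PowerSeries.C (n : ℚ) := by
      rw [show (2 : PowerSeries ℚ) = PowerSeries.C 2 from (map_ofNat _ 2).symm,
        ← map_mul, ← map_mul, show (1 : PowerSeries ℚ) = PowerSeries.C 1 from (map_one _).symm,
        ← map_mul, ← map_sub, ← map_sub, ← map_add]
      congr 1
      field_simp
      try ring
    have hLp : PowerSeries.C (((n : ℚ) - (p : ℚ)) * (p : ℚ)) * L ^ (p - 1) * L =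
        PowerSeries.C (((n : ℚ) - (p : ℚ)) * (p : ℚ)) * L ^ p := by
      rcases p with _ | k
      · simp
      · simp only [Nat.add_sub_cancel, pow_succ]
        ring
    refine ⟨by rw [hP0, ih0, pow_succ]; ring, ?_⟩
    rw [hP1, ih0, ih1]
    simp only [Nat.add_sub_cancel]
    push_cast
    apply mul_left_cancel₀ h2Cn
    linear_combination hDP p + (-(L ^ (p - 1) * L * E * Φ₀)) * hc1 + (-(E * Φ₀)) * hLp +
      (L ^ p * E * Φ₀) * hc2
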